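/- arXiv:1312.4846 — 4 statements merged into one kernel-verified Lean document; each statement's English description precedes it below -/
import Mathlib

section
/- Under the hypotheses of the strict A-coupled-expanding setup with expanding similarity ratios λᵢ > 1 on each Vᵢ, for every admissible word (a₀,…,aₙ) with respect to Σₘ⁺(A) define Δ_{a₀…aₙ} = ⋂_{j=0}^{n} f^{-j}(V_{aⱼ}). Then diam(Δ_{a₀…aₙ}) ≤ (min_i λᵢ)^{-n} · diam(D); in particular the maximum over admissible words of length n+1 of diam(Δ_{a₀…aₙ}) tends to 0 as n → ∞. -/
open Set Filter Topology

/-- diameter estimate for the basic sets of the Markov geometric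
construction of a strictly A-coupled-expanding map, and the resulting
convergence to 0 of the maximal diameter of basic sets of length n+1. -/
theorem stmt1 {d m : ℕ} (hm : 2 ≤ m)
    (D : Set (EuclideanSpace ℝ (Fin d))) (hDcl : IsClosed D)
    (hDb : Bornology.IsBounded D)
    (A : Matrix (Fin m) (Fin m) ℕ)
    (V : Fin m → Set (EuclideanSpace ℝ (Fin d)))
    (hVc : ∀ i, IsCompact (V i)) (hVD : ∀ i, V i ⊆ D)
    (hsep : ∀ i j, i ≠ j → ∃ ε > 0, ∀ x ∈ V i, ∀ y ∈ V j, ε ≤ dist x y)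
    (f : EuclideanSpace ℝ (Fin d) → EuclideanSpace ℝ (Fin d))
    (hf : ContinuousOn f (⋃ i, V i))
    (hcover : ∀ i j, A i j = 1 → V j ⊆ f '' V i)
    (lam : Fin m → ℝ) (hlam : ∀ i, 1 < lam i)
    (hexp : ∀ i, ∀ x ∈ V i, ∀ y ∈ V i, dist (f x) (f y) = lam i * dist x y) :
    (∀ (n : ℕ) (a : ℕ → Fin m), (∀ j < n, A (a j) (a (j + 1)) = 1) →
        Metric.diam (⋂ j ∈ Finset.range (n + 1), (f^[j]) ⁻¹' (V (a j)))
          ≤ (sInf (Set.range lam))⁻¹ ^ n * Metric.diam D) ∧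
      Tendsto
        (fun n : ℕ =>
          ⨆ a : {a : ℕ → Fin m // ∀ j < n, A (a j) (a (j + 1)) = 1},
            Metric.diam (⋂ j ∈ Finset.range (n + 1), (f^[j]) ⁻¹' (V (a.1 j))))
        atTop (𝓝 0) := by
  set L := sInf (Set.range lam) with hL
  have hm0 : 0 < m := by omega
  haveI : Nonempty (Fin m) := ⟨⟨0, hm0⟩⟩
  have hfin : (Set.range lam).Finite := Set.finite_range lam
  have hne : (Set.range lam).Nonempty := Set.range_nonempty lam
  have hLmem : L ∈ Set.range lam := hne.csInf_mem hfin
  obtain ⟨i0, hi0⟩ := hLmem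
  have hL1 : 1 < L := hi0 ▸ hlam i0
  have hL0 : 0 < L := lt_trans one_pos hL1
  have hLle : ∀ i, L ≤ lam i := fun i =>
    csInf_le (hfin.bddBelow) (Set.mem_range_self i)
  -- main diameter bound (no admissibility needed)
  have key : ∀ (n : ℕ) (a : ℕ → Fin m),
      Metric.diam (⋂ j ∈ Finset.range (n + 1), (f^[j]) ⁻¹' (V (a j)))
        ≤ L⁻¹ ^ n * Metric.diam D := by
    intro n a
    apply Metric.diam_le_of_forall_dist_le
    · positivity
    intro x hx y hy
    simp only [Set.mem_iInter, Finset.mem_range, Nat.lt_succ_iff] at hx hy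
    have expand : ∀ k ≤ n, L ^ k * dist x y ≤ dist (f^[k] x) (f^[k] y) := by
      intro k hk
      induction k with
      | zero => simp
      | succ k ih =>
        have hk' : k ≤ n := Nat.le_of_succ_le hk
        have ih' := ih hk'
        have hxk := hx k hk'
        have hyk := hy k hk'
        have heq := hexp (a k) _ hxk _ hyk
        rw [Function.iterate_succ_apply', Function.iterate_succ_apply', heq]
        calc L ^ (k + 1) * dist x y = L * (L ^ k * dist x y) := by ring
        _ ≤ L * dist (f^[k] x) (f^[k] y) := by
            exact mul_le_mul_of_nonneg_left ih' (le_of_lt hL0)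
        _ ≤ lam (a k) * dist (f^[k] x) (f^[k] y) := by
            exact mul_le_mul_of_nonneg_right (hLle _) dist_nonneg
    have hD : dist (f^[n] x) (f^[n] y) ≤ Metric.diam D :=
      Metric.dist_le_diam_of_mem hDb (hVD _ (hx n le_rfl)) (hVD _ (hy n le_rfl))
    have h1 : L ^ n * dist x y ≤ Metric.diam D := le_trans (expand n le_rfl) hD
    have h2 : dist x y ≤ L⁻¹ ^ n * Metric.diam D := by
      rw [inv_pow]
      rw [← le_div_iff₀' (by positivity : (0:ℝ) < L ^ n)] at h1
      simpa [div_eq_inv_mul] using h1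
    exact h2
  constructor
  · intro n a _
    exact key n a
  · have hb : ∀ n : ℕ,
        (⨆ a : {a : ℕ → Fin m // ∀ j < n, A (a j) (a (j + 1)) = 1},
          Metric.diam (⋂ j ∈ Finset.range (n + 1), (f^[j]) ⁻¹' (V (a.1 j))))
          ≤ L⁻¹ ^ n * Metric.diam D := by
      intro n
      apply Real.iSup_le
      · intro a; exact key n a.1
      · positivity
    have hnn : ∀ n : ℕ, 0 ≤
        (⨆ a : {a : ℕ → Fin m // ∀ j < n, A (a j) (a (j + 1)) = 1},
          Metric.diam (⋂ j ∈ Finset.range (n + 1), (f^[j]) ⁻¹' (V (a.1 j)))) := by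
      intro n
      exact Real.iSup_nonneg fun a => Metric.diam_nonneg
    have hlim : Tendsto (fun n : ℕ => L⁻¹ ^ n * Metric.diam D) atTop (𝓝 0) := by
      have h1 : Tendsto (fun n : ℕ => L⁻¹ ^ n) atTop (𝓝 0) := by
        apply tendsto_pow_atTop_nhds_zero_of_lt_one
        · positivity
        · exact inv_lt_one_of_one_lt₀ hL1
      simpa using h1.mul_const (Metric.diam D)
    exact squeeze_zero hnn hb hlim
end

section
/- Under the hypotheses of the strict A-coupled-expanding setup with expanding similarity ratios λᵢ > 1 on each compact piece Vᵢ (A irreducible with some row summing to at least 2), the invariant Cantor set V on which f is conjugate to σ_A equals the limit set of the Markov geometric construction: V = ⋂_{n=0}^∞ ⋃_{(a₀…aₙ) admissible} Δ_{a₀…aₙ}, where Δ_{a₀…aₙ} = ⋂_{j=0}^n f^{-j}(V_{aⱼ}). -/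
open Set

/-- the invariant Cantor set V = ⋃_{α ∈ Σₘ⁺(A)} ⋂ₙ f^{-n}(V_{αₙ})
of a strictly A-coupled-expanding map equals the limit set
⋂ₙ ⋃_{(a₀…aₙ) admissible} Δ_{a₀…aₙ} of the Markov geometric construction. -/
theorem stmt3 {d m : ℕ} (hm : 2 ≤ m)
    (D : Set (EuclideanSpace ℝ (Fin d))) (hDcl : IsClosed D)
    (hDb : Bornology.IsBounded D)
    (A : Matrix (Fin m) (Fin m) ℕ)
    (hA01 : ∀ i j, A i j = 0 ∨ A i j = 1)
    (hirr : ∀ i j, ∃ k : ℕ, 0 < (A ^ k) i j)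
    (hrow : ∃ i₀, 2 ≤ ∑ j, A i₀ j)
    (V : Fin m → Set (EuclideanSpace ℝ (Fin d)))
    (hVc : ∀ i, IsCompact (V i)) (hVD : ∀ i, V i ⊆ D)
    (hsep : ∀ i j, i ≠ j → ∃ ε > 0, ∀ x ∈ V i, ∀ y ∈ V j, ε ≤ dist x y)
    (f : EuclideanSpace ℝ (Fin d) → EuclideanSpace ℝ (Fin d))
    (hf : ContinuousOn f (⋃ i, V i))
    (hcover : ∀ i j, A i j = 1 → V j ⊆ f '' V i)
    (lam : Fin m → ℝ) (hlam : ∀ i, 1 < lam i)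
    (hexp : ∀ i, ∀ x ∈ V i, ∀ y ∈ V i, dist (f x) (f y) = lam i * dist x y) :
    (⋃ α : {α : ℕ → Fin m // ∀ n, A (α n) (α (n + 1)) = 1},
        ⋂ n : ℕ, (f^[n]) ⁻¹' (V (α.1 n)))
      = ⋂ n : ℕ, ⋃ a : {a : ℕ → Fin m // ∀ j < n, A (a j) (a (j + 1)) = 1},
          ⋂ j ∈ Finset.range (n + 1), (f^[j]) ⁻¹' (V (a.1 j)) := by
  have hdisj : ∀ i j (x : EuclideanSpace ℝ (Fin d)), x ∈ V i → x ∈ V j → i = j := by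
    intro i j x hi hj
    by_contra h
    obtain ⟨ε, hε, hsep'⟩ := hsep i j h
    have := hsep' x hi x hj
    simp only [dist_self] at this
    linarith
  ext x
  simp only [mem_iUnion, mem_iInter, mem_preimage]
  constructor
  · rintro ⟨⟨α, hα⟩, hx⟩ n
    exact ⟨⟨α, fun j _ => hα j⟩, by
      simp only [Finset.mem_range, mem_iInter, mem_preimage]
      intro j _; exact hx j⟩
  · intro hx
    choose b hb using hx
    have hb' : ∀ n, ∀ j ≤ n, f^[j] x ∈ V ((b n).1 j) := by
      intro n j hj
      have := hb n
      simp only [Finset.mem_range, mem_iInter, mem_preimage] at this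
      exact this j (Nat.lt_succ_of_le hj)
    refine ⟨⟨fun n => (b n).1 n, fun n => ?_⟩, fun n => hb' n n le_rfl⟩
    have h1 : (b (n+1)).1 n = (b n).1 n :=
      hdisj _ _ _ (hb' (n+1) n (Nat.le_succ n)) (hb' n n le_rfl)
    have h2 := (b (n+1)).2 n (Nat.lt_succ_self n)
    rwa [h1] at h2
end

section
/- Let f : D → ℝⁿ (D ⊆ ℝⁿ closed and bounded) be strictly coupled-expanding in m pairwise disjoint compact sets V₁,…,Vₘ (i.e., f(Vᵢ) ⊇ ⋃ⱼ Vⱼ for all i, and d(Vᵢ,Vⱼ) > 0 for i ≠ j), continuous on ⋃ᵢVᵢ, with d(f(x),f(y)) = λᵢ d(x,y) for x,y ∈ Vᵢ where λᵢ > 1. Then the invariant set V = ⋃_{α ∈ Σₘ⁺} ⋂_{n≥0} f^{-n}(V_{αₙ}) is a self-similar set for the contractions Sᵢ = (f|_{Vᵢ})^{-1} restricted to V, i.e., V = ⋃_{i=1}^m Sᵢ(V) where Sᵢ is a similarity with ratio 1/λᵢ, and the sets Sᵢ(V) are pairwise disjoint. -/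
open Set

/-- the invariant set V of a strictly coupled-expanding map with
similarity expansion ratios λᵢ is self-similar: the branches Sᵢ = (f|_{Vᵢ})⁻¹|_V
are similarities of ratio 1/λᵢ mapping V into Vᵢ, V = ⋃ᵢ Sᵢ(V), and the pieces
Sᵢ(V) are pairwise disjoint. -/
theorem stmt4 {n m : ℕ} (hm : 2 ≤ m)
    (D : Set (EuclideanSpace ℝ (Fin n))) (hDcl : IsClosed D)
    (hDb : Bornology.IsBounded D)
    (V : Fin m → Set (EuclideanSpace ℝ (Fin n)))
    (hVc : ∀ i, IsCompact (V i)) (hVD : ∀ i, V i ⊆ D)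
    (hsep : ∀ i j, i ≠ j → ∃ ε > 0, ∀ x ∈ V i, ∀ y ∈ V j, ε ≤ dist x y)
    (f : EuclideanSpace ℝ (Fin n) → EuclideanSpace ℝ (Fin n))
    (hf : ContinuousOn f (⋃ i, V i))
    (hcover : ∀ i j, V j ⊆ f '' V i)
    (lam : Fin m → ℝ) (hlam : ∀ i, 1 < lam i)
    (hexp : ∀ i, ∀ x ∈ V i, ∀ y ∈ V i, dist (f x) (f y) = lam i * dist x y) :
    ∃ S : Fin m → EuclideanSpace ℝ (Fin n) → EuclideanSpace ℝ (Fin n),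
      (∀ i, ∀ x ∈ (⋃ α : ℕ → Fin m, ⋂ k : ℕ, (f^[k]) ⁻¹' (V (α k))),
          S i x ∈ V i ∧ f (S i x) = x) ∧
      (∀ i, ∀ x ∈ (⋃ α : ℕ → Fin m, ⋂ k : ℕ, (f^[k]) ⁻¹' (V (α k))),
          ∀ y ∈ (⋃ α : ℕ → Fin m, ⋂ k : ℕ, (f^[k]) ⁻¹' (V (α k))),
          dist (S i x) (S i y) = (lam i)⁻¹ * dist x y) ∧
      (⋃ α : ℕ → Fin m, ⋂ k : ℕ, (f^[k]) ⁻¹' (V (α k)))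
        = ⋃ i, S i '' (⋃ α : ℕ → Fin m, ⋂ k : ℕ, (f^[k]) ⁻¹' (V (α k))) ∧
      (∀ i j, i ≠ j →
        Disjoint (S i '' (⋃ α : ℕ → Fin m, ⋂ k : ℕ, (f^[k]) ⁻¹' (V (α k))))
                 (S j '' (⋃ α : ℕ → Fin m, ⋂ k : ℕ, (f^[k]) ⁻¹' (V (α k))))) := by
  classical
  have hlam0 : ∀ i, (0:ℝ) < lam i := fun i => lt_trans one_pos (hlam i)
  -- choice of inverse branch
  have hpre : ∀ (i : Fin m) (x : EuclideanSpace ℝ (Fin n)),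
      x ∈ ⋃ j, V j → ∃ y, y ∈ V i ∧ f y = x := by
    intro i x hx
    obtain ⟨j, hj⟩ := mem_iUnion.mp hx
    obtain ⟨y, hy, hfy⟩ := hcover i j hj
    exact ⟨y, hy, hfy⟩
  choose! g hg1 hg2 using hpre
  -- W ⊆ ⋃ V j
  have hWU : (⋃ α : ℕ → Fin m, ⋂ k : ℕ, (f^[k]) ⁻¹' (V (α k))) ⊆ ⋃ j, V j := by
    intro x hx
    obtain ⟨α, hα⟩ := mem_iUnion.mp hx
    have h0 := mem_iInter.mp hα 0
    simp only [Function.iterate_zero, mem_preimage, id_eq] at h0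
    exact mem_iUnion.mpr ⟨α 0, h0⟩
  -- injectivity of f on each V i
  have hinj : ∀ i, ∀ a ∈ V i, ∀ b ∈ V i, f a = f b → a = b := by
    intro i a ha b hb hab
    have := hexp i a ha b hb
    rw [hab, dist_self] at this
    have : dist a b = 0 := by
      have := this.symm
      rcases mul_eq_zero.mp this with h | h
      · exact absurd h (ne_of_gt (hlam0 i))
      · exact h
    exact dist_eq_zero.mp this
  refine ⟨g, ?_, ?_, ?_, ?_⟩
  · intro i x hx
    exact ⟨hg1 i x (hWU hx), hg2 i x (hWU hx)⟩
  · intro i x hx y hy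
    have h := hexp i (g i x) (hg1 i x (hWU hx)) (g i y) (hg1 i y (hWU hy))
    rw [hg2 i x (hWU hx), hg2 i y (hWU hy)] at h
    field_simp [ne_of_gt (hlam0 i)]
    linarith [h]
  · ext x
    constructor
    · intro hx
      obtain ⟨α, hα⟩ := mem_iUnion.mp hx
      have hk := fun k => mem_iInter.mp hα k
      have hx0 : x ∈ V (α 0) := by
        have := hk 0
        simpa using this
      -- f x ∈ W with shifted code
      have hfx : f x ∈ (⋃ β : ℕ → Fin m, ⋂ k : ℕ, (f^[k]) ⁻¹' (V (β k))) := by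
        refine mem_iUnion.mpr ⟨fun k => α (k+1), mem_iInter.mpr fun k => ?_⟩
        have := hk (k+1)
        simpa [Function.iterate_succ_apply] using this
      refine mem_iUnion.mpr ⟨α 0, ⟨f x, hfx, ?_⟩⟩
      exact hinj (α 0) (g (α 0) (f x)) (hg1 _ _ (hWU hfx)) x hx0
        (hg2 _ _ (hWU hfx))
    · intro hx
      obtain ⟨i, hxi⟩ := mem_iUnion.mp hx
      obtain ⟨y, hy, rfl⟩ := hxi
      obtain ⟨α, hα⟩ := mem_iUnion.mp hy
      refine mem_iUnion.mpr ⟨fun k => if k = 0 then i else α (k-1),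
        mem_iInter.mpr fun k => ?_⟩
      cases k with
      | zero => simpa using hg1 i y (hWU hy)
      | succ k =>
        have := mem_iInter.mp hα k
        simp only [mem_preimage] at this ⊢
        rw [Function.iterate_succ_apply, hg2 i y (hWU hy)]
        simpa using this
  · intro i j hij
    obtain ⟨ε, hε, hsep'⟩ := hsep i j hij
    rw [Set.disjoint_left]
    rintro a ⟨x, hx, rfl⟩ ⟨y, hy, hgy⟩
    have h1 : g i x ∈ V i := hg1 i x (hWU hx)
    have h2 : g i x ∈ V j := hgy ▸ hg1 j y (hWU hy)
    have := hsep' _ h1 _ h2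
    rw [dist_self] at this
    linarith
end

section
/- Under the hypotheses of Theorem 4.2 (A with full first row/column and zeros elsewhere, strictly A-coupled-expanding f with expansion ratios λᵢ on pieces Vᵢ, conjugacy g : Σₘ⁺(A) → V with f∘g = g∘σ_A), the maps S₁ = (f|_{V₁})^{-1}|_V and Sᵢ = (f²|_{Vᵢ})^{-1}|_V for 2 ≤ i ≤ m are contracting similarities on V with ratios 1/λ₁ and 1/(λ₁λᵢ) respectively, and V = ⋃_{i=1}^m Sᵢ(V) with the union disjoint. -/
open Set

/-- under the hypotheses of Theorem 4.2 (A with full first row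
and column, zeros elsewhere; strictly A-coupled-expanding f with similarity
expansion ratios λᵢ; conjugacy g : Σₘ⁺(A) → V with f∘g = g∘σ_A), the maps
S₁ = (f|_{V₁})⁻¹|_V and Sᵢ = (f²|_{Vᵢ})⁻¹|_V (i ≥ 2) are contracting
similarities with ratios 1/λ₁ and 1/(λ₁λᵢ), and V = ⋃ᵢ Sᵢ(V) disjointly. -/
theorem stmt15 {d m : ℕ}
    (A : Matrix (Fin (m + 2)) (Fin (m + 2)) ℕ)
    (hA : ∀ i j, A i j = if i = 0 ∨ j = 0 then 1 else 0)
    (V : Fin (m + 2) → Set (EuclideanSpace ℝ (Fin d)))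
    (hVc : ∀ i, IsCompact (V i))
    (hsep : ∀ i j, i ≠ j → ∃ ε > 0, ∀ x ∈ V i, ∀ y ∈ V j, ε ≤ dist x y)
    (f : EuclideanSpace ℝ (Fin d) → EuclideanSpace ℝ (Fin d))
    (hf : ContinuousOn f (⋃ i, V i))
    (hcover : ∀ i j, A i j = 1 → V j ⊆ f '' V i)
    (lam : Fin (m + 2) → ℝ) (hlam : ∀ i, 1 < lam i)
    (hexp : ∀ i, ∀ x ∈ V i, ∀ y ∈ V i, dist (f x) (f y) = lam i * dist x y)
    (W : Set (EuclideanSpace ℝ (Fin d)))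
    (hW : W = ⋃ α : {α : ℕ → Fin (m + 2) // ∀ n, A (α n) (α (n + 1)) = 1},
        ⋂ k : ℕ, (f^[k]) ⁻¹' (V (α.1 k)))
    (g : {α : ℕ → Fin (m + 2) // ∀ n, A (α n) (α (n + 1)) = 1} ≃ₜ W)
    (hg : ∀ α, f (g α) = g ⟨fun n => α.1 (n + 1), fun n => α.2 (n + 1)⟩) :
    ∃ S : Fin (m + 2) → EuclideanSpace ℝ (Fin d) → EuclideanSpace ℝ (Fin d),
      (∀ x ∈ W, S 0 x ∈ V 0 ∧ f (S 0 x) = x) ∧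
      (∀ i : Fin (m + 2), i ≠ 0 → ∀ x ∈ W, S i x ∈ V i ∧ (f^[2]) (S i x) = x) ∧
      (∀ x ∈ W, ∀ y ∈ W, dist (S 0 x) (S 0 y) = (lam 0)⁻¹ * dist x y) ∧
      (∀ i : Fin (m + 2), i ≠ 0 → ∀ x ∈ W, ∀ y ∈ W,
        dist (S i x) (S i y) = (lam 0 * lam i)⁻¹ * dist x y) ∧
      W = ⋃ i, S i '' W ∧
      (∀ i j, i ≠ j → Disjoint (S i '' W) (S j '' W)) := by
  classical
  -- basic facts
  have hlam0 : ∀ i, (0:ℝ) < lam i := fun i => lt_trans one_pos (hlam i)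
  have h2 : ∀ z, f^[2] z = f (f z) := by
    intro z
    simp [Function.iterate_succ_apply]
  have hA0j : ∀ j, A 0 j = 1 := fun j => by simp [hA]
  have hAi0 : ∀ i, A i 0 = 1 := fun i => by simp [hA]
  have hVdisj : ∀ i j, i ≠ j → ∀ x, x ∈ V i → x ∈ V j → False := by
    intro i j hij x hxi hxj
    obtain ⟨ε, hε, h⟩ := hsep i j hij
    have := h x hxi x hxj
    simp at this
    linarith
  have hinj : ∀ i, ∀ x ∈ V i, ∀ y ∈ V i, f x = f y → x = y := by
    intro i x hx y hy hxy
    have h := hexp i x hx y hy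
    rw [hxy, dist_self] at h
    have : dist x y = 0 := (mul_eq_zero.1 h.symm).resolve_left (hlam0 i).ne'
    exact dist_eq_zero.1 this
  have memW : ∀ x, x ∈ W ↔ ∃ α : {α : ℕ → Fin (m + 2) // ∀ n, A (α n) (α (n + 1)) = 1},
      ∀ k, f^[k] x ∈ V (α.1 k) := by
    intro x
    rw [hW]
    simp only [mem_iUnion, mem_iInter, mem_preimage]
  -- existence of preimages
  have hS0ex : ∀ x ∈ W, ∃ z, z ∈ V 0 ∧ f z = x := by
    intro x hx
    obtain ⟨α, hα⟩ := (memW x).1 hx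
    have hx0 : x ∈ V (α.1 0) := by simpa using hα 0
    obtain ⟨z, hz, hfz⟩ := hcover 0 (α.1 0) (hA0j _) hx0
    exact ⟨z, hz, hfz⟩
  have hSiex : ∀ i : Fin (m+2), i ≠ 0 → ∀ x ∈ W, ∃ z, z ∈ V i ∧ f z ∈ V 0 ∧ f (f z) = x := by
    intro i hi x hx
    obtain ⟨y, hy, hfy⟩ := hS0ex x hx
    obtain ⟨z, hz, hfz⟩ := hcover i 0 (hAi0 i) hy
    exact ⟨z, hz, hfz ▸ hy, by rw [hfz, hfy]⟩
  -- define S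
  set S : Fin (m + 2) → EuclideanSpace ℝ (Fin d) → EuclideanSpace ℝ (Fin d) :=
    fun i x => if h : x ∈ W then
      (if hi : i = 0 then Classical.choose (hS0ex x h)
       else Classical.choose (hSiex i hi x h)) else x with hSdef
  have hS0 : ∀ x (hx : x ∈ W), S 0 x ∈ V 0 ∧ f (S 0 x) = x := by
    intro x hx
    have : S 0 x = Classical.choose (hS0ex x hx) := by simp [hSdef, hx]
    rw [this]
    exact Classical.choose_spec (hS0ex x hx)
  have hSi : ∀ (i : Fin (m+2)) (hi : i ≠ 0), ∀ x (hx : x ∈ W),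
      S i x ∈ V i ∧ f (S i x) ∈ V 0 ∧ f (f (S i x)) = x := by
    intro i hi x hx
    have : S i x = Classical.choose (hSiex i hi x hx) := by simp [hSdef, hx, hi]
    rw [this]
    exact Classical.choose_spec (hSiex i hi x hx)
  refine ⟨S, ?_, ?_, ?_, ?_, ?_, ?_⟩
  · intro x hx; exact hS0 x hx
  · intro i hi x hx
    obtain ⟨h1, h2', h3⟩ := hSi i hi x hx
    exact ⟨h1, by rw [h2]; exact h3⟩
  · intro x hx y hy
    obtain ⟨hx0, hfx⟩ := hS0 x hx
    obtain ⟨hy0, hfy⟩ := hS0 y hy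
    have := hexp 0 (S 0 x) hx0 (S 0 y) hy0
    rw [hfx, hfy] at this
    rw [this, inv_mul_cancel_left₀ (hlam0 0).ne']
  · intro i hi x hx y hy
    obtain ⟨hxi, hfx0, hffx⟩ := hSi i hi x hx
    obtain ⟨hyi, hfy0, hffy⟩ := hSi i hi y hy
    have e1 := hexp i (S i x) hxi (S i y) hyi
    have e2 := hexp 0 (f (S i x)) hfx0 (f (S i y)) hfy0
    rw [hffx, hffy] at e2
    rw [e1] at e2
    rw [e2, show lam 0 * (lam i * dist (S i x) (S i y))
        = (lam 0 * lam i) * dist (S i x) (S i y) by ring,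
      inv_mul_cancel_left₀ (mul_ne_zero (hlam0 0).ne' (hlam0 i).ne')]
  · -- W = ⋃ i, S i '' W
    ext x
    simp only [mem_iUnion, mem_image]
    constructor
    · rintro hx
      obtain ⟨α, hα⟩ := (memW x).1 hx
      by_cases hi : α.1 0 = 0
      · -- x ∈ V 0, use S 0 (f x)
        have hfxW : f x ∈ W := by
          rw [memW]
          exact ⟨⟨fun n => α.1 (n+1), fun n => α.2 (n+1)⟩,
            fun k => by rw [← Function.iterate_succ_apply]; exact hα (k+1)⟩
        refine ⟨0, f x, hfxW, ?_⟩
        obtain ⟨hz0, hfz⟩ := hS0 (f x) hfxW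
        have hx0 : x ∈ V 0 := hi ▸ (by simpa using hα 0)
        exact hinj 0 _ hz0 _ hx0 hfz
      · -- x ∈ V i, i ≠ 0
        have hxi : x ∈ V (α.1 0) := by simpa using hα 0
        have hα1 : α.1 1 = 0 := by
          have := α.2 0
          rw [hA] at this
          by_contra hne
          simp [hi, hne] at this
        have hfx0 : f x ∈ V 0 := by
          have := hα 1
          rw [hα1] at this
          simpa using this
        have hf2W : f^[2] x ∈ W := by
          rw [memW]
          refine ⟨⟨fun n => α.1 (n+2), fun n => α.2 (n+2)⟩, fun k => ?_⟩
          rw [← Function.iterate_add_apply]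
          exact hα (k+2)
        refine ⟨α.1 0, f^[2] x, hf2W, ?_⟩
        obtain ⟨hzi, hfz0, hffz⟩ := hSi (α.1 0) hi (f^[2] x) hf2W
        rw [h2] at hffz
        have hfeq : f (S (α.1 0) (f^[2] x)) = f x :=
          hinj 0 _ hfz0 _ hfx0 hffz
        exact hinj (α.1 0) _ hzi _ hxi hfeq
    · rintro ⟨i, y, hy, rfl⟩
      obtain ⟨α, hα⟩ := (memW y).1 hy
      rw [memW]
      by_cases hi : i = 0
      · subst hi
        obtain ⟨hz0, hfz⟩ := hS0 y hy
        refine ⟨⟨fun n => Nat.rec 0 (fun n _ => α.1 n) n, fun n => ?_⟩, fun k => ?_⟩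
        · cases n with
          | zero => exact hA0j _
          | succ n => exact α.2 n
        · cases k with
          | zero => simpa using hz0
          | succ k =>
            have : f^[k] (f (S 0 y)) ∈ V (α.1 k) := by rw [hfz]; exact hα k
            simpa [Function.iterate_succ_apply] using this
      · obtain ⟨hzi, hfz0, hffz⟩ := hSi i hi y hy
        refine ⟨⟨fun n => Nat.rec i (fun n ih => Nat.rec 0 (fun k _ => α.1 k) n) n,
          fun n => ?_⟩, fun k => ?_⟩
        · match n with
          | 0 => exact hAi0 i
          | 1 => exact hA0j _
          | (n+2) => exact α.2 n
        · match k with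
          | 0 => simpa using hzi
          | 1 => simpa using hfz0
          | (k+2) =>
            have : f^[k] (f (f (S i y))) ∈ V (α.1 k) := by rw [hffz]; exact hα k
            simpa [Function.iterate_succ_apply] using this
  · -- disjointness
    intro i j hij
    have hsub : ∀ (i : Fin (m+2)), S i '' W ⊆ V i := by
      intro i z hz
      obtain ⟨y, hy, rfl⟩ := hz
      by_cases hi : i = 0
      · subst hi; exact (hS0 y hy).1
      · exact (hSi i hi y hy).1
    rw [Set.disjoint_left]
    intro x hxi hxj
    exact hVdisj i j hij x (hsub i hxi) (hsub j hxj)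
end
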